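/- Annealed importance sampling computes expectations: under the hypotheses that S is a finite type, L ≥ 1, p_0, …, p_L : S → ℝ are strictly positive with Σ_{s∈S} p_0(s) = 1 and Σ_{s∈S} p_L(s) = 1, and T_1, …, T_{L−1} : S × S → ℝ are nonnegative, row-stochastic kernels satisfying detailed balance p_l(s) T_l(s,t) = p_l(t) T_l(t,s), for every function f : S → ℝ the weighted expectation over paths equals the expectation under p_L: Σ over all paths (x_1, …, x_L) ∈ S^L of p_0(x_1) · (Π_{l=1}^{L−1} T_l(x_l, x_{l+1})) · (Π_{l=1}^{L} p_l(x_l)/p_{l−1}(x_l)) · f(x_L) = Σ_{t∈S} p_L(t) f(t). -/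

import Mathlib

lemma ais_aux (S : Type*) [Fintype S] (m : ℕ) :
    ∀ (p : ℕ → S → ℝ), (∀ l, l ≤ m + 1 → ∀ s : S, 0 < p l s) →
    ∀ (T : ℕ → S → S → ℝ),
      (∀ l, 1 ≤ l → l ≤ m → ∀ s : S, ∑ t : S, T l s t = 1) →
      (∀ l, 1 ≤ l → l ≤ m → ∀ s t : S, p l s * T l s t = p l t * T l t s) →
    ∀ f : S → ℝ,
    ∑ x : Fin (m + 1) → S,
      p 0 (x 0) *
        (∏ l : Fin m, T (l.1 + 1) (x l.castSucc) (x l.succ)) *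
        (∏ l : Fin (m + 1), p (l.1 + 1) (x l) / p l.1 (x l)) *
        f (x (Fin.last m))
    = ∑ t : S, p (m + 1) t * f t := by
  induction m with
  | zero =>
    intro p hp T hTrow hdb f
    rw [← (Equiv.funUnique (Fin 1) S).symm.sum_comp]
    simp only [Equiv.funUnique_symm_apply, Finset.univ_unique, Fin.prod_univ_zero,
      Fin.prod_univ_one, Function.const_apply, uniqueElim_const]
    refine Finset.sum_congr rfl fun t _ => ?_
    have h0 : p 0 t ≠ 0 := (hp 0 (by omega) t).ne'
    rw [Fin.prod_univ_succ, Fin.prod_univ_zero]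
    simp only [Fin.val_zero, zero_add, mul_one]
    field_simp
  | succ m ih =>
    intro p hp T hTrow hdb f
    rw [← (Fin.consEquiv (fun _ : Fin (m + 2) => S)).sum_comp, Fintype.sum_prod_type,
      Finset.sum_comm]
    have hI : ∑ y : Fin (m + 1) → S,
        p 1 (y 0) * (∏ l : Fin m, T (l.1 + 1 + 1) (y l.castSucc) (y l.succ)) *
          (∏ l : Fin (m + 1), p (l.1 + 1 + 1) (y l) / p (l.1 + 1) (y l)) * f (y (Fin.last m))
        = ∑ t : S, p (m + 1 + 1) t * f t :=
      ih (fun l => p (l + 1)) (fun l hl s => hp (l + 1) (by omega) s) (fun l => T (l + 1))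
        (fun l h1 h2 => hTrow (l + 1) (by omega) (by omega))
        (fun l h1 h2 => hdb (l + 1) (by omega) (by omega)) f
    rw [← hI]
    refine Finset.sum_congr rfl fun y _ => ?_
    have hsum : (∑ s : S, p 1 s * T 1 s (y 0)) = p 1 (y 0) := by
      calc ∑ s : S, p 1 s * T 1 s (y 0)
          = ∑ s : S, p 1 (y 0) * T 1 (y 0) s :=
            Finset.sum_congr rfl fun s _ => hdb 1 le_rfl (by omega) s (y 0)
        _ = p 1 (y 0) * ∑ s : S, T 1 (y 0) s := by rw [Finset.mul_sum]
        _ = p 1 (y 0) := by rw [hTrow 1 le_rfl (by omega) (y 0), mul_one]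
    calc ∑ s : S,
          p 0 ((Fin.consEquiv (fun _ : Fin (m + 2) => S)) (s, y) 0) *
            (∏ l : Fin (m + 1), T (l.1 + 1)
              ((Fin.consEquiv (fun _ : Fin (m + 2) => S)) (s, y) l.castSucc)
              ((Fin.consEquiv (fun _ : Fin (m + 2) => S)) (s, y) l.succ)) *
            (∏ l : Fin (m + 2), p (l.1 + 1) ((Fin.consEquiv (fun _ : Fin (m + 2) => S)) (s, y) l) /
              p l.1 ((Fin.consEquiv (fun _ : Fin (m + 2) => S)) (s, y) l)) *
            f ((Fin.consEquiv (fun _ : Fin (m + 2) => S)) (s, y) (Fin.last (m + 1)))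
        = (∑ s : S, p 1 s * T 1 s (y 0)) *
            ((∏ l : Fin m, T (l.1 + 1 + 1) (y l.castSucc) (y l.succ)) *
              ((∏ l : Fin (m + 1), p (l.1 + 1 + 1) (y l) / p (l.1 + 1) (y l)) *
                f (y (Fin.last m)))) := by
          rw [Finset.sum_mul]
          refine Finset.sum_congr rfl fun s _ => ?_
          simp only [Fin.consEquiv_apply]
          conv_lhs => rw [Fin.prod_univ_succ, Fin.prod_univ_succ]
          simp only [Fin.castSucc_zero, ← Fin.succ_castSucc, ← Fin.succ_last,
            Fin.cons_succ, Fin.cons_zero, Fin.val_succ, Fin.val_zero, zero_add]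
          have h0 : p 0 s ≠ 0 := (hp 0 (by omega) s).ne'
          have hP : (∏ x : Fin (m + 1), p (x.1 + 1) (y x)) ≠ 0 :=
            Finset.prod_ne_zero_iff.mpr fun i _ => (hp (i.1 + 1) (by omega) (y i)).ne'
          field_simp
      _ = p 1 (y 0) * (∏ l : Fin m, T (l.1 + 1 + 1) (y l.castSucc) (y l.succ)) *
            (∏ l : Fin (m + 1), p (l.1 + 1 + 1) (y l) / p (l.1 + 1) (y l)) * f (y (Fin.last m)) := by
          rw [hsum]; ring


/-- Annealed importance sampling computes expectations. Under the same
hypotheses as the correctness statement (finite `S`, `L ≥ 1`, strictly positive `p l` with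
`p 0`, `p L` probability distributions, nonnegative row-stochastic kernels `T l` in detailed
balance with `p l`), for every `f : S → ℝ`, the weighted expectation of `f (x L)` over paths
`(x 1, …, x L) ∈ S^L` (encoded as `x : Fin L → S` with `x ⟨l-1, _⟩` playing the role of
`x l`) equals the expectation of `f` under `p L`. -/
theorem ais_expectation (S : Type*) [Fintype S] (L : ℕ) (hL : 1 ≤ L)
    (p : ℕ → S → ℝ) (hp : ∀ l ≤ L, ∀ s : S, 0 < p l s)
    (hp0 : ∑ s : S, p 0 s = 1) (hpL : ∑ s : S, p L s = 1)
    (T : ℕ → S → S → ℝ)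
    (hTnn : ∀ l, 1 ≤ l → l ≤ L - 1 → ∀ s t : S, 0 ≤ T l s t)
    (hTrow : ∀ l, 1 ≤ l → l ≤ L - 1 → ∀ s : S, ∑ t : S, T l s t = 1)
    (hdb : ∀ l, 1 ≤ l → l ≤ L - 1 → ∀ s t : S, p l s * T l s t = p l t * T l t s)
    (f : S → ℝ) :
    ∑ x : Fin L → S,
      p 0 (x ⟨0, by omega⟩) *
        (∏ l : Fin (L - 1), T (l.1 + 1) (x ⟨l.1, by have := l.isLt; omega⟩)
          (x ⟨l.1 + 1, by have := l.isLt; omega⟩)) *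
        (∏ l : Fin L, p (l.1 + 1) (x l) / p l.1 (x l)) *
        f (x ⟨L - 1, by omega⟩)
    = ∑ t : S, p L t * f t := by
  obtain ⟨m, rfl⟩ : ∃ m, L = m + 1 := ⟨L - 1, by omega⟩
  exact ais_aux S m p (fun l hl s => hp l hl s) T
    (fun l h1 h2 s => hTrow l h1 (by omega) s)
    (fun l h1 h2 s t => hdb l h1 (by omega) s t) f
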